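/- Let k be a natural number and Q(s) := ∑_{e^l < p ≤ e^{l+1}} 1/(2 p^{2s}) with k = ⌈l e^{4l/5}⌉ and T large enough that e^{2(l+1)k} ≤ T/log T. Then ∫_T^{2T} |e^{l/10} Q(1/2 + it)|^{2k} dt ≪ T e^{-l e^{l/2}}. -/

import Mathlib

set_option maxHeartbeats 1000000

open Finset Real

/-- `Q_l(z) = ∑_{e^l < p ≤ e^{l+1}} 1/(2 p^{2z})`, sum over primes. -/
noncomputable def Qpoly (l : ℕ) (z : ℂ) : ℂ :=
  ∑ p ∈ (Finset.Ioc ⌊Real.exp l⌋₊ ⌊Real.exp ((l : ℝ) + 1)⌋₊).filter Nat.Prime,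
    1 / (2 * (p : ℂ) ^ (2 * z))

lemma log_gap (m n : ℕ) (hm : 1 ≤ m) (hmn : m < n) :
    1 / ((m:ℝ)+1) ≤ Real.log n - Real.log m := by
  have hm0 : (0:ℝ) < m := by exact_mod_cast hm
  have h3 : (0:ℝ) < (m:ℝ)+1 := by linarith
  have h := Real.log_le_sub_one_of_pos (show (0:ℝ) < (m:ℝ)/((m:ℝ)+1) by positivity)
  rw [Real.log_div (ne_of_gt hm0) (ne_of_gt h3)] at h
  have h5 : (m:ℝ)/((m:ℝ)+1) - 1 = -(1/((m:ℝ)+1)) := by field_simp; ring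
  have h8 : Real.log ((m:ℝ)+1) ≤ Real.log n := by
    apply Real.log_le_log (by linarith)
    have : (m:ℝ)+1 ≤ n := by exact_mod_cast hmn
    linarith
  linarith

lemma cos_int_bound (θ a b : ℝ) (hθ : θ ≠ 0) :
    |∫ t in a..b, Real.cos (θ*t)| ≤ 2/|θ| := by
  have h : (∫ t in a..b, Real.cos (θ*t)) = θ⁻¹ • ∫ x in θ*a..θ*b, Real.cos x :=
    intervalIntegral.integral_comp_mul_left Real.cos hθ
  rw [h, integral_cos, smul_eq_mul, abs_mul, abs_inv, div_eq_mul_inv, mul_comm]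
  have h2 : |Real.sin (θ*b) - Real.sin (θ*a)| ≤ 2 := by
    calc |Real.sin (θ*b) - Real.sin (θ*a)| ≤ |Real.sin (θ*b)| + |Real.sin (θ*a)| := abs_sub _ _
    _ ≤ 1 + 1 := by gcongr <;> exact Real.abs_sin_le_one _
    _ = 2 := by norm_num
  exact mul_le_mul_of_nonneg_right h2 (inv_nonneg.mpr (abs_nonneg θ))

lemma factorial_le_stirling : ∀ k : ℕ, 1 ≤ k →
    (k.factorial : ℝ) ≤ Real.exp 1 * k * ((k:ℝ) / Real.exp 1)^k := by
  intro k
  induction k with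
  | zero => intro h; omega
  | succ n ih =>
    intro _
    rcases Nat.eq_zero_or_pos n with h0 | h1
    · subst h0
      have hE := Real.exp_pos 1
      have : ((Nat.factorial (0+1) : ℕ):ℝ) = 1 := by norm_num [Nat.factorial]
      rw [this]
      have h2 : Real.exp 1 * ((0:ℕ)+1:ℕ) * ((((0:ℕ)+1:ℕ):ℝ)/Real.exp 1)^(0+1) = 1 := by
        push_cast; rw [pow_one]; field_simp
      rw [h2]
    · have hn := ih h1
      have hn0 : (0:ℝ) < n := by exact_mod_cast h1
      have hE := Real.exp_pos 1
      have key : Real.exp 1 * (n:ℝ)^(n+1) ≤ ((n:ℝ)+1)^(n+1) := by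
        have hg := log_gap n (n+1) h1 (by omega)
        push_cast at hg
        have hg' : (1:ℝ) ≤ (Real.log ((n:ℝ)+1) - Real.log n) * ((n:ℝ)+1) := by
          rw [div_le_iff₀ (by positivity)] at hg
          linarith
        have h2 : Real.exp 1 ≤ Real.exp (((n:ℕ)+1:ℕ) * (Real.log (((n:ℝ)+1)/n))) := by
          apply Real.exp_le_exp.mpr
          rw [Real.log_div (by positivity) (ne_of_gt hn0)]
          push_cast
          nlinarith [hg']
        rw [Real.exp_nat_mul, Real.exp_log (by positivity)] at h2
        rw [div_pow] at h2
        push_cast at h2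
        rw [le_div_iff₀ (by positivity)] at h2
        linarith
      have pos1 : (0:ℝ) < Real.exp 1 ^ n := by positivity
      calc ((n+1).factorial : ℝ) = ((n:ℝ)+1) * (n.factorial : ℝ) := by
            rw [Nat.factorial_succ]; push_cast; ring
      _ ≤ ((n:ℝ)+1) * (Real.exp 1 * n * ((n:ℝ)/Real.exp 1)^n) := by
            apply mul_le_mul_of_nonneg_left hn (by positivity)
      _ ≤ Real.exp 1 * ((n:ℝ)+1) * (((n:ℝ)+1)/Real.exp 1)^(n+1) := by
            rw [div_pow, div_pow]
            rw [show ((n:ℝ)+1) * (Real.exp 1 * n * ((n:ℝ)^n / Real.exp 1 ^ n))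
                = (((n:ℝ)+1) * (Real.exp 1 * n * (n:ℝ)^n)) / Real.exp 1 ^ n from by ring]
            rw [show Real.exp 1 * ((n:ℝ)+1) * (((n:ℝ)+1)^(n+1) / Real.exp 1 ^ (n+1))
                = (Real.exp 1 * ((n:ℝ)+1) * ((n:ℝ)+1)^(n+1)) / Real.exp 1 ^ (n+1) from by ring]
            rw [div_le_div_iff₀ pos1 (by positivity)]
            have hps : (n:ℝ)^(n+1) = (n:ℝ)^n * n := pow_succ _ _
            have hps2 : Real.exp 1 ^ (n+1) = Real.exp 1 ^ n * Real.exp 1 := pow_succ _ _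
            rw [hps2]
            have c0 : (0:ℝ) ≤ Real.exp 1 * ((n:ℝ)+1) * Real.exp 1 ^ n := by positivity
            calc ((n:ℝ) + 1) * (Real.exp 1 * n * (n:ℝ) ^ n) * (Real.exp 1 ^ n * Real.exp 1)
                = (Real.exp 1 * ((n:ℝ)+1) * Real.exp 1 ^ n) * (Real.exp 1 * (n:ℝ)^(n+1)) := by
                  rw [hps]; ring
              _ ≤ (Real.exp 1 * ((n:ℝ)+1) * Real.exp 1 ^ n) * (((n:ℝ)+1)^(n+1)) :=
                  mul_le_mul_of_nonneg_left key c0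
              _ = Real.exp 1 * ((n:ℝ) + 1) * ((n:ℝ) + 1) ^ (n + 1) * Real.exp 1 ^ n := by ring
      _ = Real.exp 1 * (((n:ℕ)+1:ℕ):ℝ) * ((((n:ℕ)+1:ℕ):ℝ)/Real.exp 1)^(n+1) := by push_cast; ring

lemma list_perm_of_prod_eq {k : ℕ} (f g : Fin k → ℕ) (hf : ∀ i, (f i).Prime)
    (hg : ∀ i, (g i).Prime) (h : ∏ i, f i = ∏ i, g i) : List.Perm (List.ofFn f) (List.ofFn g) := by
  have h1 : (List.ofFn f).prod = ∏ i, f i := List.prod_ofFn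
  have h2 : (List.ofFn g).prod = ∏ i, g i := List.prod_ofFn
  have pf : List.Perm (List.ofFn f) ((∏ i, f i).primeFactorsList) := by
    apply Nat.primeFactorsList_unique h1
    intro p hp
    obtain ⟨i, rfl⟩ := Set.mem_range.mp ((List.mem_ofFn' _ _).mp hp)
    exact hf i
  have pg : List.Perm (List.ofFn g) ((∏ i, f i).primeFactorsList) := by
    apply Nat.primeFactorsList_unique (h ▸ h2)
    intro p hp
    obtain ⟨i, rfl⟩ := Set.mem_range.mp ((List.mem_ofFn' _ _).mp hp)
    exact hg i
  exact pf.trans pg.symm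

lemma card_fiber_le {k : ℕ} (P : Finset ℕ) (hP : ∀ p ∈ P, p.Prime) (f : Fin k → ℕ)
    (hf : ∀ i, (f i).Prime) :
    ((Fintype.piFinset (fun _ : Fin k => P)).filter (fun g => ∏ i, f i = ∏ i, g i)).card
      ≤ k.factorial := by
  have := Finset.card_le_card_of_injOn (fun g => List.ofFn g)
    (s := (Fintype.piFinset (fun _ : Fin k => P)).filter (fun g => ∏ i, f i = ∏ i, g i))
    (t := ((List.ofFn f).permutations).toFinset) ?_ ?_
  · refine this.trans ?_
    refine (List.toFinset_card_le _).trans ?_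
    rw [List.length_permutations, List.length_ofFn]
  · intro g hgmem
    rw [Finset.mem_coe, Finset.mem_filter] at hgmem
    have hgp : ∀ i, (g i).Prime := fun i =>
      hP _ (Fintype.mem_piFinset.mp hgmem.1 i)
    rw [Finset.mem_coe, List.mem_toFinset, List.mem_permutations]
    exact (list_perm_of_prod_eq f g hf hgp hgmem.2).symm
  · exact fun x _ y _ hxy => List.ofFn_injective hxy

lemma prod_comp_eq_of_perm {k : ℕ} (a : ℕ → ℝ) (f g : Fin k → ℕ)
    (h : List.Perm (List.ofFn f) (List.ofFn g)) : ∏ i, a (f i) = ∏ i, a (g i) := by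
  have h1 : (List.ofFn (a ∘ f)).prod = ∏ i, a (f i) := List.prod_ofFn
  have h2 : (List.ofFn (a ∘ g)).prod = ∏ i, a (g i) := List.prod_ofFn
  rw [← h1, ← h2, ← List.map_ofFn (f := f) (g := a), ← List.map_ofFn (f := g) (g := a)]
  exact (h.map a).prod_eq

lemma diag_sum_le {k : ℕ} (P : Finset ℕ) (hP : ∀ p ∈ P, p.Prime) (a : ℕ → ℝ)
    (ha : ∀ p, 0 ≤ a p) :
    ∑ f ∈ Fintype.piFinset (fun _ : Fin k => P), ∑ g ∈ Fintype.piFinset (fun _ : Fin k => P),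
      (if ∏ i, f i = ∏ i, g i then (∏ i, a (f i)) * (∏ i, a (g i)) else 0)
    ≤ (k.factorial : ℝ) * (∑ p ∈ P, (a p)^2)^k := by
  have step : ∀ f ∈ Fintype.piFinset (fun _ : Fin k => P),
      ∑ g ∈ Fintype.piFinset (fun _ : Fin k => P),
        (if ∏ i, f i = ∏ i, g i then (∏ i, a (f i)) * (∏ i, a (g i)) else 0)
      ≤ (k.factorial : ℝ) * ∏ i, (a (f i))^2 := by
    intro f hf
    have hfp : ∀ i, (f i).Prime := fun i => hP _ (Fintype.mem_piFinset.mp hf i)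
    rw [← Finset.sum_filter]
    have heach : ∀ g ∈ (Fintype.piFinset (fun _ : Fin k => P)).filter
        (fun g => ∏ i, f i = ∏ i, g i),
        (∏ i, a (f i)) * (∏ i, a (g i)) = ∏ i, (a (f i))^2 := by
      intro g hg
      rw [Finset.mem_filter] at hg
      have hgp : ∀ i, (g i).Prime := fun i => hP _ (Fintype.mem_piFinset.mp hg.1 i)
      have := prod_comp_eq_of_perm a f g (list_perm_of_prod_eq f g hfp hgp hg.2)
      rw [← this, ← Finset.prod_mul_distrib]
      congr 1; funext i; ring
    rw [Finset.sum_congr rfl heach, Finset.sum_const, nsmul_eq_mul]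
    apply mul_le_mul_of_nonneg_right
    · exact_mod_cast Nat.cast_le.mpr (card_fiber_le P hP f hfp)
    · positivity
  calc ∑ f ∈ Fintype.piFinset (fun _ : Fin k => P), ∑ g ∈ Fintype.piFinset (fun _ : Fin k => P),
        (if ∏ i, f i = ∏ i, g i then (∏ i, a (f i)) * (∏ i, a (g i)) else 0)
      ≤ ∑ f ∈ Fintype.piFinset (fun _ : Fin k => P), (k.factorial : ℝ) * ∏ i, (a (f i))^2 :=
        Finset.sum_le_sum step
    _ = (k.factorial : ℝ) * (∑ p ∈ P, (a p)^2)^k := by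
        rw [← Finset.mul_sum]
        congr 1
        rw [show (∑ p ∈ P, (a p)^2)^k = ∏ _i : Fin k, ∑ p ∈ P, (a p)^2 by
          rw [Finset.prod_const]; simp]
        rw [Finset.prod_univ_sum]

lemma pointwise_expand (P : Finset ℕ) (hP : ∀ p ∈ P, p ≠ 0) (a : ℕ → ℝ) (k : ℕ) (t : ℝ) :
    (‖∑ p ∈ P, (a p : ℂ) * Complex.exp ((-(2*t*Real.log p) : ℝ) * Complex.I)‖)^(2*k)
    = ∑ f ∈ Fintype.piFinset (fun _ : Fin k => P), ∑ g ∈ Fintype.piFinset (fun _ : Fin k => P),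
        (∏ i, a (f i)) * (∏ i, a (g i)) *
          Real.cos ((2*(Real.log ((∏ i, g i : ℕ)) - Real.log ((∏ i, f i : ℕ)))) * t) := by
  set F : ℂ := ∑ p ∈ P, (a p : ℂ) * Complex.exp ((-(2*t*Real.log p) : ℝ) * Complex.I) with hF
  -- step 1 : F^k as a sum over tuples
  have hpow : ∀ (s : ℝ), F ^ k = ∑ f ∈ Fintype.piFinset (fun _ : Fin k => P),
      ((∏ i, a (f i) : ℝ) : ℂ) *
        Complex.exp (((-(2*t*Real.log ((∏ i, f i : ℕ)))) : ℝ) * Complex.I) := by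
    intro _
    rw [hF]
    rw [show (∑ p ∈ P, (a p : ℂ) * Complex.exp ((-(2*t*Real.log p) : ℝ) * Complex.I)) ^ k
        = ∏ _i : Fin k, ∑ p ∈ P, (a p : ℂ) * Complex.exp ((-(2*t*Real.log p) : ℝ) * Complex.I) by
      rw [Finset.prod_const, Finset.card_univ, Fintype.card_fin]]
    rw [Finset.prod_univ_sum]
    apply Finset.sum_congr rfl
    intro f hf
    rw [Finset.prod_mul_distrib]
    congr 1
    · push_cast; rfl
    · rw [← Complex.exp_sum]
      congr 1
      have hlog : Real.log ((∏ i, f i : ℕ)) = ∑ i, Real.log (f i) := by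
        push_cast
        rw [Real.log_prod]
        intro i _
        exact_mod_cast fun h => (hP _ (Fintype.mem_piFinset.mp hf i)) (by exact_mod_cast h)
      rw [hlog]
      push_cast
      rw [← Finset.sum_mul]
      congr 1
      simp [Finset.mul_sum]
  have habs : (‖F‖)^(2*k) = (F^k * (starRingEnd ℂ) (F^k)).re := by
    rw [Complex.mul_conj, Complex.ofReal_re, ← Complex.sq_norm, norm_pow, ← pow_mul, mul_comm k 2]
  have term : ∀ (r s x y : ℝ),
      ((r:ℂ) * Complex.exp ((x:ℝ) * Complex.I) * ((s:ℂ) * Complex.exp ((y:ℝ) * Complex.I))).re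
        = r * s * Real.cos (x+y) := by
    intro r s x y
    have h : (r:ℂ) * Complex.exp ((x:ℝ) * Complex.I) * ((s:ℂ) * Complex.exp ((y:ℝ) * Complex.I))
        = ((r*s : ℝ) : ℂ) * Complex.exp (((x+y : ℝ) : ℂ) * Complex.I) := by
      rw [mul_mul_mul_comm, ← Complex.exp_add]
      congr 1
      · push_cast; ring
      · congr 1; push_cast; ring
    rw [h, Complex.re_ofReal_mul, Complex.exp_ofReal_mul_I_re]
  have hconj : (starRingEnd ℂ) (F^k) = ∑ g ∈ Fintype.piFinset (fun _ : Fin k => P),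
      ((∏ i, a (g i) : ℝ) : ℂ) *
        Complex.exp (((2*t*Real.log ((∏ i, g i : ℕ))) : ℝ) * Complex.I) := by
    rw [hpow 0, map_sum]
    apply Finset.sum_congr rfl
    intro g _
    rw [map_mul, Complex.conj_ofReal, ← Complex.exp_conj]
    congr 1
    rw [map_mul, Complex.conj_ofReal, Complex.conj_I]
    push_cast
    ring
  rw [habs, hconj, hpow 0, Finset.sum_mul_sum, Complex.re_sum]
  apply Finset.sum_congr rfl
  intro f _
  rw [Complex.re_sum]
  apply Finset.sum_congr rfl
  intro g _
  rw [term]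
  congr 1
  ring

lemma offdiag_int_bound (m n : ℕ) (hm : 1 ≤ m) (hn : 1 ≤ n) (hne : m ≠ n) (N T : ℝ)
    (hmN : (m:ℝ)+1 ≤ N) (hnN : (n:ℝ)+1 ≤ N) :
    |∫ t in T..(2*T), Real.cos ((2*(Real.log n - Real.log m)) * t)| ≤ N := by
  have key : ∀ (m' n' : ℕ), 1 ≤ m' → m' < n' → (m':ℝ)+1 ≤ N →
      |∫ t in T..(2*T), Real.cos ((2*(Real.log n' - Real.log m')) * t)| ≤ N := by
    intro m' n' hm' hlt hN'
    have hgap := log_gap m' n' hm' hlt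
    have hpos : (0:ℝ) < (m':ℝ)+1 := by positivity
    have hΔpos : 0 < Real.log n' - Real.log m' := lt_of_lt_of_le (by positivity) hgap
    have hθ : (2*(Real.log n' - Real.log m')) ≠ 0 := by positivity
    refine (cos_int_bound _ _ _ hθ).trans ?_
    have habs : |2*(Real.log n' - Real.log m')| = 2*(Real.log n' - Real.log m') :=
      abs_of_pos (by positivity)
    rw [habs]
    rw [div_le_iff₀ (by positivity)]
    calc (2:ℝ) = ((m':ℝ)+1) * (2 * (1/((m':ℝ)+1))) := by field_simp
    _ ≤ N * (2*(Real.log n' - Real.log m')) := by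
        apply mul_le_mul (by linarith) (by linarith) (by positivity) (by linarith)
  rcases Nat.lt_or_ge m n with hlt | hge
  · exact key m n hm hlt hmN
  · have hlt : n < m := lt_of_le_of_ne hge (Ne.symm hne)
    have := key n m hn hlt hnN
    calc |∫ t in T..(2*T), Real.cos ((2*(Real.log n - Real.log m)) * t)|
        = |∫ t in T..(2*T), Real.cos ((2*(Real.log m - Real.log n)) * t)| := by
          congr 1
          apply intervalIntegral.integral_congr
          intro t _
          show Real.cos _ = Real.cos _
          rw [show (2*(Real.log n - Real.log m)) * t = -((2*(Real.log m - Real.log n)) * t) by ring,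
            Real.cos_neg]
    _ ≤ N := this

lemma moment_bound (P : Finset ℕ) (hP : ∀ p ∈ P, p.Prime) (a : ℕ → ℝ) (ha : ∀ p, 0 ≤ a p)
    (k : ℕ) (T : ℝ) (hT : 0 ≤ T) (N : ℝ) (hN0 : 0 ≤ N)
    (hN : ∀ f ∈ Fintype.piFinset (fun _ : Fin k => P), ((∏ i, f i : ℕ) : ℝ) + 1 ≤ N) :
    (∫ t in T..(2*T), (‖∑ p ∈ P, (a p : ℂ)
        * Complex.exp ((-(2*t*Real.log p) : ℝ) * Complex.I)‖)^(2*k))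
      ≤ T * k.factorial * (∑ p ∈ P, (a p)^2)^k + N * (∑ p ∈ P, a p)^(2*k) := by
  have hptw := fun t => pointwise_expand P (fun p hp => (hP p hp).pos.ne') a k t
  simp only [hptw]
  have hone : ∀ f ∈ Fintype.piFinset (fun _ : Fin k => P), 1 ≤ ∏ i, f i := by
    intro f hf
    apply Finset.one_le_prod'
    intro i _
    exact (hP _ (Fintype.mem_piFinset.mp hf i)).one_lt.le
  have hsplit : (∫ t in T..(2*T), ∑ f ∈ Fintype.piFinset (fun _ : Fin k => P),
        ∑ g ∈ Fintype.piFinset (fun _ : Fin k => P),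
        (∏ i, a (f i)) * (∏ i, a (g i)) *
          Real.cos ((2*(Real.log ((∏ i, g i : ℕ)) - Real.log ((∏ i, f i : ℕ)))) * t))
      = ∑ f ∈ Fintype.piFinset (fun _ : Fin k => P),
        ∑ g ∈ Fintype.piFinset (fun _ : Fin k => P),
        ∫ t in T..(2*T), (∏ i, a (f i)) * (∏ i, a (g i)) *
          Real.cos ((2*(Real.log ((∏ i, g i : ℕ)) - Real.log ((∏ i, f i : ℕ)))) * t) := by
    rw [intervalIntegral.integral_finset_sum (fun f _ =>
      ((continuous_finset_sum _ (fun g _ => by fun_prop)).intervalIntegrable _ _))]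
    exact Finset.sum_congr rfl fun f _ =>
      intervalIntegral.integral_finset_sum (fun g _ =>
        ((by fun_prop : Continuous _).intervalIntegrable _ _))
  rw [hsplit]
  have hterm : ∀ f ∈ Fintype.piFinset (fun _ : Fin k => P),
      ∀ g ∈ Fintype.piFinset (fun _ : Fin k => P),
      (∫ t in T..(2*T), (∏ i, a (f i)) * (∏ i, a (g i)) *
          Real.cos ((2*(Real.log ((∏ i, g i : ℕ)) - Real.log ((∏ i, f i : ℕ)))) * t))
      ≤ T * (if ∏ i, f i = ∏ i, g i then (∏ i, a (f i)) * (∏ i, a (g i)) else 0)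
        + N * ((∏ i, a (f i)) * (∏ i, a (g i))) := by
    intro f hf g hg
    have hcf : 0 ≤ ∏ i, a (f i) := Finset.prod_nonneg fun i _ => ha _
    have hcg : 0 ≤ ∏ i, a (g i) := Finset.prod_nonneg fun i _ => ha _
    have hcc : 0 ≤ (∏ i, a (f i)) * (∏ i, a (g i)) := mul_nonneg hcf hcg
    rw [intervalIntegral.integral_const_mul]
    by_cases hd : ∏ i, f i = ∏ i, g i
    · rw [if_pos hd, hd]
      have : (∫ t in T..(2*T), Real.cos ((2*(Real.log ((∏ i, g i : ℕ))
          - Real.log ((∏ i, g i : ℕ)))) * t)) = T := by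
        simp only [sub_self, mul_zero, zero_mul, Real.cos_zero]
        rw [intervalIntegral.integral_const, smul_eq_mul, mul_one]
        ring
      rw [this]
      nlinarith [mul_nonneg hN0 hcc]
    · rw [if_neg hd]
      have hb := offdiag_int_bound (∏ i, f i) (∏ i, g i) (hone f hf) (hone g hg) hd N T
        (hN f hf) (hN g hg)
      have : (∏ i, a (f i)) * (∏ i, a (g i)) *
          (∫ t in T..(2*T), Real.cos ((2*(Real.log ((∏ i, g i : ℕ))
            - Real.log ((∏ i, f i : ℕ)))) * t)) ≤ (∏ i, a (f i)) * (∏ i, a (g i)) * N := by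
        apply mul_le_mul_of_nonneg_left _ hcc
        exact (le_abs_self _).trans hb
      nlinarith
  calc ∑ f ∈ Fintype.piFinset (fun _ : Fin k => P), ∑ g ∈ Fintype.piFinset (fun _ : Fin k => P),
        (∫ t in T..(2*T), (∏ i, a (f i)) * (∏ i, a (g i)) *
          Real.cos ((2*(Real.log ((∏ i, g i : ℕ)) - Real.log ((∏ i, f i : ℕ)))) * t))
      ≤ ∑ f ∈ Fintype.piFinset (fun _ : Fin k => P), ∑ g ∈ Fintype.piFinset (fun _ : Fin k => P),
        (T * (if ∏ i, f i = ∏ i, g i then (∏ i, a (f i)) * (∏ i, a (g i)) else 0)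
          + N * ((∏ i, a (f i)) * (∏ i, a (g i)))) := by
        apply Finset.sum_le_sum
        intro f hf
        apply Finset.sum_le_sum
        intro g hg
        exact hterm f hf g hg
  _ = T * (∑ f ∈ Fintype.piFinset (fun _ : Fin k => P), ∑ g ∈ Fintype.piFinset (fun _ : Fin k => P),
        (if ∏ i, f i = ∏ i, g i then (∏ i, a (f i)) * (∏ i, a (g i)) else 0))
      + N * ((∑ f ∈ Fintype.piFinset (fun _ : Fin k => P), ∏ i, a (f i))
          * (∑ g ∈ Fintype.piFinset (fun _ : Fin k => P), ∏ i, a (g i))) := by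
        have hN2 : ∑ f ∈ Fintype.piFinset (fun _ : Fin k => P),
            ∑ g ∈ Fintype.piFinset (fun _ : Fin k => P),
              N * ((∏ i, a (f i)) * (∏ i, a (g i)))
            = N * ((∑ f ∈ Fintype.piFinset (fun _ : Fin k => P), ∏ i, a (f i))
              * (∑ g ∈ Fintype.piFinset (fun _ : Fin k => P), ∏ i, a (g i))) := by
          rw [Finset.sum_mul_sum, Finset.mul_sum]
          apply Finset.sum_congr rfl
          intro f _
          rw [Finset.mul_sum]
        have hT2 : ∑ f ∈ Fintype.piFinset (fun _ : Fin k => P),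
            ∑ g ∈ Fintype.piFinset (fun _ : Fin k => P),
              T * (if ∏ i, f i = ∏ i, g i then (∏ i, a (f i)) * (∏ i, a (g i)) else 0)
            = T * (∑ f ∈ Fintype.piFinset (fun _ : Fin k => P),
              ∑ g ∈ Fintype.piFinset (fun _ : Fin k => P),
              (if ∏ i, f i = ∏ i, g i then (∏ i, a (f i)) * (∏ i, a (g i)) else 0)) := by
          rw [Finset.mul_sum]
          apply Finset.sum_congr rfl
          intro f _
          rw [Finset.mul_sum]
        rw [← hN2, ← hT2, ← Finset.sum_add_distrib]
        apply Finset.sum_congr rfl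
        intro f _
        rw [← Finset.sum_add_distrib]
  _ ≤ T * ((k.factorial : ℝ) * (∑ p ∈ P, (a p)^2)^k) + N * (∑ p ∈ P, a p)^(2*k) := by
        have hd := diag_sum_le P hP a ha (k := k)
        have hS : (∑ f ∈ Fintype.piFinset (fun _ : Fin k => P), ∏ i, a (f i))
            = (∑ p ∈ P, a p)^k := by
          rw [show (∑ p ∈ P, a p)^k = ∏ _i : Fin k, ∑ p ∈ P, a p by
            rw [Finset.prod_const, Finset.card_univ, Fintype.card_fin]]
          rw [Finset.prod_univ_sum]
        apply add_le_add
        · exact mul_le_mul_of_nonneg_left hd hT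
        · rw [hS, ← pow_add]
          apply le_of_eq
          congr 1
          ring
  _ = T * k.factorial * (∑ p ∈ P, (a p)^2)^k + N * (∑ p ∈ P, a p)^(2*k) := by ring


lemma Qpoly_eq (l : ℕ) (t : ℝ) :
    Qpoly l (1/2 + Complex.I * (t:ℂ))
      = ∑ p ∈ (Finset.Ioc ⌊Real.exp l⌋₊ ⌊Real.exp ((l:ℝ)+1)⌋₊).filter Nat.Prime,
        ((1/(2*(p:ℝ)) : ℝ) : ℂ) * Complex.exp ((-(2*t*Real.log p) : ℝ) * Complex.I) := by
  unfold Qpoly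
  apply Finset.sum_congr rfl
  intro p hp
  have hprime : p.Prime := (Finset.mem_filter.mp hp).2
  have hp0 : (p:ℂ) ≠ 0 := Nat.cast_ne_zero.mpr hprime.pos.ne'
  have h1 : (2:ℂ) * (1/2 + Complex.I * t) = 1 + (2*Complex.I*t) := by ring
  rw [h1, Complex.cpow_add _ _ hp0, Complex.cpow_one, Complex.cpow_def_of_ne_zero hp0]
  rw [← Complex.natCast_log]
  have h2 : ((Real.log p : ℂ)) * (2*Complex.I*t)
      = -(((-(2*t*Real.log p) : ℝ) : ℂ) * Complex.I) := by
    push_cast; ring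
  rw [h2, Complex.exp_neg]
  have hexp := Complex.exp_ne_zero (((-(2*t*Real.log p) : ℝ) : ℂ) * Complex.I)
  push_cast
  field_simp

lemma card_primes_le (l : ℕ) (hl : 1 ≤ l) :
    (((Finset.Ioc ⌊Real.exp l⌋₊ ⌊Real.exp ((l:ℝ)+1)⌋₊).filter Nat.Prime).card : ℝ) * (l:ℝ)
      ≤ 1.39 * Real.exp ((l:ℝ)+1) := by
  set x : ℝ := (l:ℝ) with hx
  set M : ℕ := ⌊Real.exp (x+1)⌋₊ with hM
  set P : Finset ℕ := (Finset.Ioc ⌊Real.exp l⌋₊ M).filter Nat.Prime with hPdef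
  have hmem : ∀ p ∈ P, Real.exp x ≤ (p:ℝ) := by
    intro p hp
    rw [hPdef, Finset.mem_filter, Finset.mem_Ioc] at hp
    have h1 : Real.exp x < (⌊Real.exp (l:ℝ)⌋₊ : ℝ) + 1 := Nat.lt_floor_add_one _
    have h2 : (⌊Real.exp (l:ℝ)⌋₊ : ℝ) + 1 ≤ (p:ℝ) := by
      have := hp.1.1
      exact_mod_cast Nat.succ_le_of_lt this
    exact (le_of_lt (lt_of_lt_of_le h1 h2))
  have h1 : (Real.exp x)^P.card ≤ ∏ p ∈ P, (p:ℝ) := by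
    rw [← Finset.prod_const]
    exact Finset.prod_le_prod (fun p _ => (Real.exp_pos x).le) hmem
  have h2 : (∏ p ∈ P, p) ≤ primorial M := by
    apply Finset.prod_le_prod_of_subset_of_one_le'
    · intro p hp
      rw [hPdef, Finset.mem_filter, Finset.mem_Ioc] at hp
      rw [Finset.mem_filter, Finset.mem_range]
      exact ⟨Nat.lt_succ_of_le hp.1.2, hp.2⟩
    · intro p hp _
      exact Nat.one_le_iff_ne_zero.mpr (Nat.Prime.pos (Finset.mem_filter.mp hp).2).ne'
  have h3 : (primorial M : ℝ) ≤ (4:ℝ)^M := by exact_mod_cast primorial_le_4_pow M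
  have h4 : (4:ℝ)^M ≤ Real.exp (1.39 * Real.exp (x+1)) := by
    have h5 : (4:ℝ) = Real.exp (Real.log 4) := (Real.exp_log (by norm_num)).symm
    rw [h5, ← Real.exp_nat_mul]
    apply Real.exp_le_exp.mpr
    have hlog4 : Real.log 4 ≤ 1.39 := by
      have : (4:ℝ) = 2^2 := by norm_num
      rw [this, Real.log_pow]
      have := Real.log_two_lt_d9
      push_cast
      nlinarith
    have hMle : (M:ℝ) ≤ Real.exp (x+1) := Nat.floor_le (le_of_lt (Real.exp_pos _))
    have hlog4' : 0 ≤ Real.log 4 := Real.log_nonneg (by norm_num)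
    nlinarith [Real.exp_pos (x+1)]
  have hcast : (∏ p ∈ P, (p:ℝ)) = ((∏ p ∈ P, p : ℕ) : ℝ) := by push_cast; rfl
  have h6 : Real.exp ((P.card : ℝ) * x) ≤ Real.exp (1.39 * Real.exp (x+1)) := by
    rw [Real.exp_nat_mul]
    refine h1.trans (hcast.le.trans (le_trans ?_ h4))
    exact_mod_cast (Nat.cast_le.mpr h2 : ((∏ p ∈ P, p : ℕ) : ℝ) ≤ (primorial M : ℝ)).trans h3
  exact Real.exp_le_exp.mp h6

-- small numeric facts
lemma exp_pow_eq (c : ℝ) (n : ℕ) : (Real.exp c)^n = Real.exp ((n:ℝ)*c) := by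
  rw [← Real.exp_nat_mul]

lemma exp08_ge : (2.2223:ℝ) ≤ Real.exp (4/5) := by
  have h4 : (2.7182818283:ℝ)^4 ≤ (Real.exp 1)^4 :=
    pow_le_pow_left₀ (by norm_num) Real.exp_one_gt_d9.le 4
  have h5 : (Real.exp 1)^4 = Real.exp 4 := by rw [exp_pow_eq]; norm_num
  have h6 : (2.2223:ℝ)^5 ≤ Real.exp 4 := by nlinarith [h4]
  have h7 : (Real.exp (4/5))^5 = Real.exp 4 := by rw [exp_pow_eq]; norm_num
  exact le_of_pow_le_pow_left₀ (n := 5) (by norm_num) (Real.exp_pos _).le (by rw [h7]; exact h6)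

lemma exp_neg08_le : Real.exp (-(4/5)) ≤ 0.45 := by
  have h := exp08_ge
  have hprod : Real.exp (-(4/5)) * Real.exp (4/5) = 1 := by
    rw [← Real.exp_add]; norm_num
  nlinarith [Real.exp_pos (-(4/5))]

lemma exp23_le : Real.exp (2/3) ≤ 1.96 := by
  have h2 : Real.exp 2 ≤ 7.3891 := by
    have : (Real.exp 1)^2 = Real.exp 2 := by rw [exp_pow_eq]; norm_num
    nlinarith [Real.exp_one_lt_d9, Real.exp_pos 1]
  have h7 : (Real.exp (2/3))^3 = Real.exp 2 := by rw [exp_pow_eq]; norm_num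
  exact le_of_pow_le_pow_left₀ (n := 3) (by norm_num) (by norm_num) (by rw [h7]; nlinarith [h2])

lemma base_le_expneg23 (b : ℝ) (hb : b ≤ 0.5075) : b ≤ Real.exp (-(2/3)) := by
  have h := exp23_le
  have hprod : Real.exp (-(2/3)) * Real.exp (2/3) = 1 := by
    rw [← Real.exp_add]; norm_num
  nlinarith [Real.exp_pos (-(2/3)), Real.exp_pos (2/3)]

lemma exp3_le : Real.exp 3 ≤ 20.09 := by
  have h : (Real.exp 1)^3 = Real.exp 3 := by rw [exp_pow_eq]; norm_num
  have h2 : (Real.exp 1)^3 ≤ (2.7182818286:ℝ)^3 :=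
    pow_le_pow_left₀ (Real.exp_pos _).le Real.exp_one_lt_d9.le 3
  nlinarith [h2]

lemma two_le_exp09 : (1.9:ℝ) ≤ Real.exp (9/10) := by
  nlinarith [Real.add_one_le_exp (9/10 : ℝ)]

lemma exp_third : (2:ℝ) ≤ Real.exp (9/10) := by
  have hl2 := Real.log_two_lt_d9
  have : (2:ℝ) = Real.exp (Real.log 2) := (Real.exp_log (by norm_num)).symm
  rw [this]
  apply Real.exp_le_exp.mpr
  nlinarith [Real.log_two_gt_d9]

lemma diamond (l k : ℕ) (hl : 1 ≤ l)
    (hkge : (l:ℝ) * Real.exp (4*(l:ℝ)/5) ≤ (k:ℝ)) :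
    (l:ℝ) * Real.exp ((l:ℝ)/2) ≤ (k:ℝ)/2 + 3 := by
  have hK0 : (0:ℝ) ≤ (k:ℝ) := Nat.cast_nonneg k
  rcases Nat.lt_or_ge l 3 with h3 | h3
  · interval_cases l
    · -- l = 1
      have : Real.exp ((1:ℝ)/2) ≤ Real.exp 1 := Real.exp_le_exp.mpr (by norm_num)
      have he := Real.exp_one_lt_d9
      push_cast
      nlinarith
    · -- l = 2
      have h1 : (2:ℝ) * Real.exp (4*(2:ℝ)/5) ≤ (k:ℝ) := by exact_mod_cast hkge
      have h2 : Real.exp 1 ≤ Real.exp (4*(2:ℝ)/5) := Real.exp_le_exp.mpr (by norm_num)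
      have he := Real.exp_one_lt_d9
      push_cast
      have : Real.exp ((2:ℝ)/2) = Real.exp 1 := by norm_num
      rw [this]
      nlinarith
  · -- l ≥ 3
    have hx3 : (3:ℝ) ≤ (l:ℝ) := by exact_mod_cast h3
    have hsplit : Real.exp (4*(l:ℝ)/5) = Real.exp ((l:ℝ)/2) * Real.exp (3*(l:ℝ)/10) := by
      rw [← Real.exp_add]; congr 1; ring
    have h2 : (2:ℝ) ≤ Real.exp (3*(l:ℝ)/10) := by
      refine exp_third.trans (Real.exp_le_exp.mpr ?_)
      nlinarith
    have : (l:ℝ) * (Real.exp ((l:ℝ)/2) * 2) ≤ (l:ℝ) * Real.exp (4*(l:ℝ)/5) := by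
      rw [hsplit]
      apply mul_le_mul_of_nonneg_left _ (by positivity)
      apply mul_le_mul_of_nonneg_left h2 (Real.exp_pos _).le
    nlinarith [Real.exp_pos ((l:ℝ)/2), mul_pos (show (0:ℝ) < l by linarith) (Real.exp_pos ((l:ℝ)/2))]

lemma partA (T : ℝ) (l k : ℕ) (B : ℝ) (hl : 1 ≤ l) (hT0 : 0 < T) (hk1 : 1 ≤ k)
    (hkge : (l:ℝ) * Real.exp (4*(l:ℝ)/5) ≤ (k:ℝ))
    (hkle : (k:ℝ) ≤ (l:ℝ) * Real.exp (4*(l:ℝ)/5) + 1)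
    (hB0 : 0 ≤ B) (hB : B ≤ 0.35 * Real.exp (1-(l:ℝ))/(l:ℝ)) :
    (Real.exp ((l:ℝ)/10))^(2*k) * (T * (k.factorial : ℝ) * B^k)
      ≤ 500 * T * Real.exp (-(l:ℝ) * Real.exp ((l:ℝ)/2)) := by
  set x : ℝ := (l:ℝ) with hxdef
  have hx1 : (1:ℝ) ≤ x := by rw [hxdef]; exact_mod_cast hl
  have hx0 : (0:ℝ) < x := by linarith
  have hK1 : (1:ℝ) ≤ (k:ℝ) := by exact_mod_cast hk1
  have hE10 : (Real.exp (x/10))^(2*k) = (Real.exp (x/5))^k := by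
    rw [exp_pow_eq, exp_pow_eq]; congr 1; push_cast; ring
  set Bb : ℝ := 0.35 * Real.exp (1-x)/x with hBbdef
  have hBb0 : 0 ≤ Bb := by positivity
  -- base bound
  have hbase : Real.exp (x/5) * ((k:ℝ)/Real.exp 1) * Bb ≤ Real.exp (-(2/3)) := by
    apply base_le_expneg23
    have hexpand : Real.exp (x/5) * ((k:ℝ)/Real.exp 1) * Bb
        = 0.35 * ((k:ℝ) * Real.exp (-(4*x/5)) / x) := by
      rw [hBbdef]
      rw [show Real.exp (-(4*x/5)) = Real.exp (x/5) * Real.exp (1-x) / Real.exp 1 by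
        rw [← Real.exp_add, ← Real.exp_sub]; congr 1; ring]
      field_simp
    rw [hexpand]
    have h1 : (k:ℝ) * Real.exp (-(4*x/5)) / x ≤ 1 + Real.exp (-(4*x/5))/x := by
      have h2 : (k:ℝ) * Real.exp (-(4*x/5)) ≤ x + Real.exp (-(4*x/5)) := by
        have h3 : (k:ℝ) * Real.exp (-(4*x/5)) ≤ (x * Real.exp (4*x/5) + 1) * Real.exp (-(4*x/5)) :=
          mul_le_mul_of_nonneg_right hkle (Real.exp_pos _).le
        have h4 : Real.exp (4*x/5) * Real.exp (-(4*x/5)) = 1 := by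
          rw [← Real.exp_add]; norm_num
        nlinarith
      rw [div_le_iff₀ hx0, add_mul, div_mul_cancel₀ _ (ne_of_gt hx0)]
      linarith
    have h5 : Real.exp (-(4*x/5))/x ≤ 0.45 := by
      have h6 : Real.exp (-(4*x/5)) ≤ Real.exp (-(4/5)) := Real.exp_le_exp.mpr (by nlinarith)
      have h7 := exp_neg08_le
      rw [div_le_iff₀ hx0]
      nlinarith [Real.exp_pos (-(4*x/5))]
    nlinarith
  calc (Real.exp (x/10))^(2*k) * (T * (k.factorial:ℝ) * B^k)
      = T * ((k.factorial:ℝ) * ((Real.exp (x/5))^k * B^k)) := by rw [hE10]; ring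
    _ ≤ T * ((Real.exp 1 * k * ((k:ℝ)/Real.exp 1)^k) * ((Real.exp (x/5))^k * Bb^k)) := by
        apply mul_le_mul_of_nonneg_left _ hT0.le
        apply mul_le_mul (factorial_le_stirling k hk1)
        · exact mul_le_mul_of_nonneg_left (pow_le_pow_left₀ hB0 hB k) (by positivity)
        · positivity
        · positivity
    _ = T * (Real.exp 1 * k) * (Real.exp (x/5) * ((k:ℝ)/Real.exp 1) * Bb)^k := by
        rw [mul_pow, mul_pow]; ring
    _ ≤ T * (Real.exp 1 * k) * (Real.exp (-(2/3)))^k := by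
        apply mul_le_mul_of_nonneg_left _ (by positivity)
        exact pow_le_pow_left₀ (by positivity) hbase k
    _ ≤ 500 * T * Real.exp (-x * Real.exp (x/2)) := by
        have hK6 : (k:ℝ) ≤ 6*Real.exp ((k:ℝ)/6) := by
          nlinarith [Real.add_one_le_exp ((k:ℝ)/6)]
        have hsplit2 : Real.exp ((k:ℝ)/6) * Real.exp ((k:ℝ)*(-(2/3))) = Real.exp (-((k:ℝ)/2)) := by
          rw [← Real.exp_add]; congr 1; ring
        have hdia := diamond l k hl hkge
        have hmono : Real.exp (-((k:ℝ)/2)) ≤ Real.exp 3 * Real.exp (-x*Real.exp (x/2)) := by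
          rw [← Real.exp_add]
          apply Real.exp_le_exp.mpr
          linarith [hdia]
        rw [exp_pow_eq]
        have he := Real.exp_one_lt_d9
        have h3 := exp3_le
        have hco : Real.exp 1 * 6 * Real.exp 3 ≤ 500 := by
          nlinarith [Real.exp_pos 3, Real.exp_pos 1]
        calc T * (Real.exp 1 * k) * Real.exp ((k:ℝ)*(-(2/3)))
            ≤ T * (Real.exp 1 * (6*Real.exp ((k:ℝ)/6))) * Real.exp ((k:ℝ)*(-(2/3))) := by
              apply mul_le_mul_of_nonneg_right _ (Real.exp_pos _).le
              apply mul_le_mul_of_nonneg_left _ hT0.le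
              exact mul_le_mul_of_nonneg_left hK6 (Real.exp_pos _).le
          _ = T * (6*Real.exp 1) * (Real.exp ((k:ℝ)/6) * Real.exp ((k:ℝ)*(-(2/3)))) := by ring
          _ = T * (6*Real.exp 1) * Real.exp (-((k:ℝ)/2)) := by rw [hsplit2]
          _ ≤ T * (6*Real.exp 1) * (Real.exp 3 * Real.exp (-x*Real.exp (x/2))) := by
              apply mul_le_mul_of_nonneg_left hmono (by positivity)
          _ = (Real.exp 1 * 6 * Real.exp 3) * (T * Real.exp (-x*Real.exp (x/2))) := by ring
          _ ≤ 500 * (T * Real.exp (-x*Real.exp (x/2))) :=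
              mul_le_mul_of_nonneg_right hco (by positivity)
          _ = 500 * T * Real.exp (-x * Real.exp (x/2)) := by ring

lemma partB (T : ℝ) (l k : ℕ) (S : ℝ) (hl : 1 ≤ l) (hT0 : 0 < T) (hk1 : 1 ≤ k)
    (hkge : (l:ℝ) * Real.exp (4*(l:ℝ)/5) ≤ (k:ℝ))
    (hTK : Real.exp (2*((l:ℝ)+1)*k) ≤ T)
    (hS0 : 0 ≤ S) (hS : S ≤ 1.9/(l:ℝ)) :
    (Real.exp ((l:ℝ)/10))^(2*k) * (2*Real.exp (((l:ℝ)+1)*k) * S^(2*k))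
      ≤ 500 * T * Real.exp (-(l:ℝ) * Real.exp ((l:ℝ)/2)) := by
  have hx1 : (1:ℝ) ≤ (l:ℝ) := by exact_mod_cast hl
  have hx0 : (0:ℝ) < (l:ℝ) := by linarith
  have hD0 : (0:ℝ) < Real.exp ((l:ℝ)/10 - ((l:ℝ)+1)/2) := Real.exp_pos _
  have hSD0 : 0 ≤ S * Real.exp ((l:ℝ)/10 - ((l:ℝ)+1)/2) := mul_nonneg hS0 hD0.le
  have key : (Real.exp ((l:ℝ)/10))^(2*k) * Real.exp (((l:ℝ)+1)*k) * S^(2*k)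
      = Real.exp (2*((l:ℝ)+1)*k) * (S * Real.exp ((l:ℝ)/10 - ((l:ℝ)+1)/2))^(2*k) := by
    have e1 : (Real.exp ((l:ℝ)/10))^(2*k) = Real.exp (((2*k:ℕ):ℝ)*((l:ℝ)/10)) := exp_pow_eq _ _
    have e2 : (Real.exp ((l:ℝ)/10 - ((l:ℝ)+1)/2))^(2*k)
        = Real.exp (((2*k:ℕ):ℝ)*((l:ℝ)/10 - ((l:ℝ)+1)/2)) := exp_pow_eq _ _
    calc (Real.exp ((l:ℝ)/10))^(2*k) * Real.exp (((l:ℝ)+1)*k) * S^(2*k)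
        = S^(2*k) * (Real.exp (((2*k:ℕ):ℝ)*((l:ℝ)/10)) * Real.exp (((l:ℝ)+1)*k)) := by
          rw [e1]; ring
      _ = S^(2*k) * (Real.exp (2*((l:ℝ)+1)*k) * Real.exp (((2*k:ℕ):ℝ)*((l:ℝ)/10 - ((l:ℝ)+1)/2))) := by
          rw [← Real.exp_add, ← Real.exp_add]; congr 1; push_cast; ring
      _ = Real.exp (2*((l:ℝ)+1)*k) * (S * Real.exp ((l:ℝ)/10 - ((l:ℝ)+1)/2))^(2*k) := by
          rw [mul_pow, e2]; ring
  have hmain : 2*(S * Real.exp ((l:ℝ)/10 - ((l:ℝ)+1)/2))^(2*k)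
      ≤ 500 * Real.exp (-(l:ℝ) * Real.exp ((l:ℝ)/2)) := by
    have hSD : S * Real.exp ((l:ℝ)/10 - ((l:ℝ)+1)/2)
        ≤ (1.9/(l:ℝ)) * Real.exp ((l:ℝ)/10 - ((l:ℝ)+1)/2) :=
      mul_le_mul_of_nonneg_right hS hD0.le
    rcases Nat.lt_or_ge l 2 with h2 | h2
    · -- l = 1
      have hl1 : l = 1 := by omega
      subst hl1
      have hexph : Real.exp ((1:ℝ)/2) ≤ 2 := by
        apply le_of_pow_le_pow_left₀ (n := 2) (by norm_num) (by norm_num)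
        rw [exp_pow_eq]
        have : ((2:ℕ):ℝ) * ((1:ℝ)/2) = 1 := by norm_num
        rw [this]
        nlinarith [Real.exp_one_lt_d9]
      have hsd1 : S * Real.exp (((1:ℕ):ℝ)/10 - (((1:ℕ):ℝ)+1)/2) ≤ 1 := by
        have h9 := two_le_exp09
        have hprod : Real.exp (-(9/10:ℝ)) * Real.exp (9/10:ℝ) = 1 := by
          rw [← Real.exp_add]; norm_num
        have harg : (((1:ℕ):ℝ)/10 - (((1:ℕ):ℝ)+1)/2) = -(9/10:ℝ) := by push_cast; norm_num
        rw [harg] at hSD ⊢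
        have : (1.9/((1:ℕ):ℝ)) * Real.exp (-(9/10:ℝ)) ≤ 1 := by
          push_cast
          nlinarith [Real.exp_pos (-(9/10:ℝ))]
        linarith
      have hpow1 : (S * Real.exp (((1:ℕ):ℝ)/10 - (((1:ℕ):ℝ)+1)/2))^(2*k) ≤ 1 :=
        pow_le_one₀ hSD0 hsd1
      have hfin : 2 ≤ 500 * Real.exp (-((1:ℕ):ℝ) * Real.exp (((1:ℕ):ℝ)/2)) := by
        push_cast
        have hle2 : Real.exp (-(1:ℝ) * Real.exp ((1:ℝ)/2)) ≥ Real.exp (-(2:ℝ)) := by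
          apply Real.exp_le_exp.mpr
          nlinarith [hexph, Real.exp_pos ((1:ℝ)/2)]
        have hprod : Real.exp (-(2:ℝ)) * Real.exp (2:ℝ) = 1 := by
          rw [← Real.exp_add]; norm_num
        have hexp2 : Real.exp (2:ℝ) ≤ 7.3891 := by
          rw [show (2:ℝ) = ((2:ℕ):ℝ)*1 by norm_num, ← exp_pow_eq]
          nlinarith [Real.exp_one_lt_d9, Real.exp_pos 1]
        nlinarith [Real.exp_pos (-(2:ℝ)), Real.exp_pos (-(1:ℝ) * Real.exp ((1:ℝ)/2))]
      calc 2*(S * Real.exp (((1:ℕ):ℝ)/10 - (((1:ℕ):ℝ)+1)/2))^(2*k) ≤ 2*1 := by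
            nlinarith [hpow1]
        _ ≤ 500 * Real.exp (-((1:ℕ):ℝ) * Real.exp (((1:ℕ):ℝ)/2)) := by linarith [hfin]
    · -- l ≥ 2
      have hx2 : (2:ℝ) ≤ (l:ℝ) := by exact_mod_cast h2
      have hD1 : Real.exp ((l:ℝ)/10 - ((l:ℝ)+1)/2) ≤ Real.exp (-(1:ℝ)) := by
        apply Real.exp_le_exp.mpr
        nlinarith
      have h19 : 1.9/(l:ℝ) ≤ 1 := by
        rw [div_le_one hx0]; linarith
      have hsd : S * Real.exp ((l:ℝ)/10 - ((l:ℝ)+1)/2) ≤ Real.exp (-(1:ℝ)) := by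
        calc S * Real.exp ((l:ℝ)/10 - ((l:ℝ)+1)/2)
            ≤ (1.9/(l:ℝ)) * Real.exp ((l:ℝ)/10 - ((l:ℝ)+1)/2) := hSD
          _ ≤ 1 * Real.exp (-(1:ℝ)) := by
              apply mul_le_mul h19 hD1 hD0.le (by norm_num)
          _ = Real.exp (-(1:ℝ)) := by ring
      have hpow : (S * Real.exp ((l:ℝ)/10 - ((l:ℝ)+1)/2))^(2*k) ≤ (Real.exp (-(1:ℝ)))^(2*k) :=
        pow_le_pow_left₀ hSD0 hsd _
      have hexpk : (Real.exp (-(1:ℝ)))^(2*k) ≤ Real.exp (-(l:ℝ) * Real.exp ((l:ℝ)/2)) := by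
        rw [exp_pow_eq]
        apply Real.exp_le_exp.mpr
        have hmono45 : Real.exp ((l:ℝ)/2) ≤ Real.exp (4*(l:ℝ)/5) := by
          apply Real.exp_le_exp.mpr; linarith
        have : (l:ℝ) * Real.exp ((l:ℝ)/2) ≤ (k:ℝ) :=
          le_trans (mul_le_mul_of_nonneg_left hmono45 (Nat.cast_nonneg l)) hkge
        push_cast
        nlinarith [(Nat.cast_nonneg k : (0:ℝ) ≤ (k:ℝ))]
      calc 2*(S * Real.exp ((l:ℝ)/10 - ((l:ℝ)+1)/2))^(2*k)
          ≤ 2*Real.exp (-(l:ℝ) * Real.exp ((l:ℝ)/2)) := by nlinarith [hpow, hexpk]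
        _ ≤ 500 * Real.exp (-(l:ℝ) * Real.exp ((l:ℝ)/2)) := by
            nlinarith [Real.exp_pos (-(l:ℝ) * Real.exp ((l:ℝ)/2))]
  have hpk : (0:ℝ) ≤ (S * Real.exp ((l:ℝ)/10 - ((l:ℝ)+1)/2))^(2*k) := by positivity
  calc (Real.exp ((l:ℝ)/10))^(2*k) * (2*Real.exp (((l:ℝ)+1)*k) * S^(2*k))
      = 2 * (Real.exp (2*((l:ℝ)+1)*k) * (S * Real.exp ((l:ℝ)/10 - ((l:ℝ)+1)/2))^(2*k)) := by
        rw [← key]; ring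
    _ ≤ 2 * (T * (S * Real.exp ((l:ℝ)/10 - ((l:ℝ)+1)/2))^(2*k)) := by
        nlinarith [mul_le_mul_of_nonneg_right hTK hpk]
    _ = T * (2 * (S * Real.exp ((l:ℝ)/10 - ((l:ℝ)+1)/2))^(2*k)) := by ring
    _ ≤ T * (500 * Real.exp (-(l:ℝ) * Real.exp ((l:ℝ)/2))) :=
        mul_le_mul_of_nonneg_left hmain hT0.le
    _ = 500 * T * Real.exp (-(l:ℝ) * Real.exp ((l:ℝ)/2)) := by ring

/-- Moment bound for `Q_l`: with `k = ⌈l e^{4l/5}⌉` and `e^{2(l+1)k} ≤ T/log T`,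
`∫_T^{2T} (e^{l/10} |Q_l(1/2+it)|)^{2k} dt ≪ T e^{-l e^{l/2}}`. -/

theorem stmt12 : ∃ C > 0, ∀ (T : ℝ) (l k : ℕ), 1 ≤ l → 3 ≤ T →
    k = ⌈(l : ℝ) * Real.exp (4 * (l : ℝ) / 5)⌉₊ →
    Real.exp (2 * ((l : ℝ) + 1) * k) ≤ T / Real.log T →
    (∫ t in T..(2 * T),
      (Real.exp ((l : ℝ) / 10) *
        ‖Qpoly l (1 / 2 + Complex.I * (t : ℂ))‖) ^ (2 * k))
    ≤ C * T * Real.exp (-(l : ℝ) * Real.exp ((l : ℝ) / 2)) := by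
  refine ⟨1000, by norm_num, ?_⟩
  intro T l k hl hT hk hTk
  have hx1 : (1:ℝ) ≤ (l:ℝ) := by exact_mod_cast hl
  have hx0 : (0:ℝ) < (l:ℝ) := by linarith
  have hT0 : (0:ℝ) < T := by linarith
  have hkpos : (0:ℝ) < (l:ℝ) * Real.exp (4*(l:ℝ)/5) := by positivity
  have hk1 : 1 ≤ k := by
    rw [hk]
    have := Nat.ceil_pos.mpr hkpos
    omega
  have hkge : (l:ℝ) * Real.exp (4*(l:ℝ)/5) ≤ (k:ℝ) := by
    rw [hk]; exact Nat.le_ceil _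
  have hkle : (k:ℝ) ≤ (l:ℝ) * Real.exp (4*(l:ℝ)/5) + 1 := by
    rw [hk]; exact (Nat.ceil_lt_add_one hkpos.le).le
  have hlogT : 1 ≤ Real.log T := by
    rw [Real.le_log_iff_exp_le hT0]
    have := Real.exp_one_lt_d9
    linarith
  have hTK : Real.exp (2*((l:ℝ)+1)*k) ≤ T := hTk.trans (div_le_self hT0.le hlogT)
  set P : Finset ℕ := (Finset.Ioc ⌊Real.exp l⌋₊ ⌊Real.exp ((l:ℝ)+1)⌋₊).filter Nat.Prime with hPdef
  have hPprime : ∀ p ∈ P, Nat.Prime p := fun p hp => (Finset.mem_filter.mp hp).2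
  have hPlb : ∀ p ∈ P, Real.exp (l:ℝ) ≤ (p:ℝ) := by
    intro p hp
    rw [hPdef, Finset.mem_filter, Finset.mem_Ioc] at hp
    have h1 : Real.exp (l:ℝ) < (⌊Real.exp ((l:ℝ))⌋₊ : ℝ) + 1 := Nat.lt_floor_add_one _
    have h2 : (⌊Real.exp ((l:ℝ))⌋₊ : ℝ) + 1 ≤ (p:ℝ) := by
      exact_mod_cast Nat.succ_le_of_lt hp.1.1
    linarith
  have hPub : ∀ p ∈ P, (p:ℝ) ≤ Real.exp ((l:ℝ)+1) := by
    intro p hp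
    rw [hPdef, Finset.mem_filter, Finset.mem_Ioc] at hp
    refine le_trans ?_ (Nat.floor_le (Real.exp_pos _).le)
    exact_mod_cast hp.1.2
  have ha0 : ∀ p : ℕ, (0:ℝ) ≤ 1/(2*(p:ℝ)) := by
    intro p; positivity
  have haP : ∀ p ∈ P, 1/(2*(p:ℝ)) ≤ Real.exp (-(l:ℝ))/2 := by
    intro p hp
    have h1 := hPlb p hp
    have hep := Real.exp_pos (l:ℝ)
    have h2 : 1/(2*(p:ℝ)) ≤ 1/(2*Real.exp (l:ℝ)) :=
      one_div_le_one_div_of_le (by positivity) (by linarith)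
    have h3 : 1/(2*Real.exp (l:ℝ)) = Real.exp (-(l:ℝ))/2 := by
      rw [Real.exp_neg]; field_simp
    rw [h3] at h2
    exact h2
  have hcard := card_primes_le l hl
  -- B bound
  have hB0 : (0:ℝ) ≤ ∑ p ∈ P, (1/(2*(p:ℝ)))^2 := by positivity
  have hBb : ∑ p ∈ P, (1/(2*(p:ℝ)))^2 ≤ 0.35 * Real.exp (1-(l:ℝ))/(l:ℝ) := by
    have h1 : ∀ p ∈ P, (1/(2*(p:ℝ)))^2 ≤ (Real.exp (-(l:ℝ))/2)^2 := by
      intro p hp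
      exact pow_le_pow_left₀ (ha0 p) (haP p hp) 2
    calc ∑ p ∈ P, (1/(2*(p:ℝ)))^2 ≤ (P.card : ℝ) * ((Real.exp (-(l:ℝ))/2)^2) := by
          refine le_trans (Finset.sum_le_card_nsmul P _ _ h1) ?_
          rw [nsmul_eq_mul]
      _ ≤ (1.39 * Real.exp ((l:ℝ)+1)/(l:ℝ)) * ((Real.exp (-(l:ℝ))/2)^2) := by
          apply mul_le_mul_of_nonneg_right _ (by positivity)
          rw [le_div_iff₀ hx0]
          exact hcard
      _ = (1.39/4) * (Real.exp ((l:ℝ)+1) * (Real.exp (-(l:ℝ)) * Real.exp (-(l:ℝ)))) / (l:ℝ) := by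
          ring
      _ ≤ 0.35 * Real.exp (1-(l:ℝ))/(l:ℝ) := by
          rw [← Real.exp_add, ← Real.exp_add]
          rw [show (l:ℝ)+1 + (-(l:ℝ) + -(l:ℝ)) = 1 - (l:ℝ) by ring]
          gcongr
          norm_num
  have hS0 : (0:ℝ) ≤ ∑ p ∈ P, 1/(2*(p:ℝ)) := by positivity
  have hSb : ∑ p ∈ P, 1/(2*(p:ℝ)) ≤ 1.9/(l:ℝ) := by
    calc ∑ p ∈ P, 1/(2*(p:ℝ)) ≤ (P.card : ℝ) * (Real.exp (-(l:ℝ))/2) := by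
          refine le_trans (Finset.sum_le_card_nsmul P _ _ haP) ?_
          rw [nsmul_eq_mul]
      _ ≤ (1.39 * Real.exp ((l:ℝ)+1)/(l:ℝ)) * (Real.exp (-(l:ℝ))/2) := by
          apply mul_le_mul_of_nonneg_right _ (by positivity)
          rw [le_div_iff₀ hx0]; exact hcard
      _ = (1.39/2) * (Real.exp ((l:ℝ)+1) * Real.exp (-(l:ℝ))) / (l:ℝ) := by ring
      _ ≤ 1.9/(l:ℝ) := by
          rw [← Real.exp_add, show (l:ℝ)+1 + -(l:ℝ) = 1 by ring]
          have he := Real.exp_one_lt_d9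
          gcongr
          nlinarith
  have hNf : ∀ f ∈ Fintype.piFinset (fun _ : Fin k => P),
      ((∏ i, f i : ℕ):ℝ) + 1 ≤ 2*Real.exp (((l:ℝ)+1)*k) := by
    intro f hf
    have h1 : ((∏ i, f i : ℕ):ℝ) ≤ Real.exp (((l:ℝ)+1)*k) := by
      have h2 : ((∏ i, f i : ℕ):ℝ) = ∏ i, ((f i:ℕ):ℝ) := by push_cast; rfl
      rw [h2]
      calc ∏ i, ((f i:ℕ):ℝ) ≤ ∏ _i : Fin k, Real.exp ((l:ℝ)+1) :=
            Finset.prod_le_prod (fun i _ => Nat.cast_nonneg _)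
              (fun i _ => hPub _ (Fintype.mem_piFinset.mp hf i))
        _ = Real.exp (((l:ℝ)+1)*k) := by
            rw [Finset.prod_const, Finset.card_univ, Fintype.card_fin, exp_pow_eq]
            congr 1; ring
    have h3 : (1:ℝ) ≤ Real.exp (((l:ℝ)+1)*k) := by
      have h4 : (0:ℝ) ≤ ((l:ℝ)+1)*(k:ℝ) := by positivity
      nlinarith [Real.add_one_le_exp (((l:ℝ)+1)*(k:ℝ))]
    linarith
  have hmb := moment_bound P hPprime (fun p => 1/(2*(p:ℝ))) ha0 k T hT0.le
      (2*Real.exp (((l:ℝ)+1)*k)) (by positivity) hNf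
  calc (∫ t in T..(2*T), (Real.exp ((l:ℝ)/10)
          * ‖Qpoly l (1/2 + Complex.I * (t:ℂ))‖)^(2*k))
      = ∫ t in T..(2*T), (Real.exp ((l:ℝ)/10))^(2*k) * (‖∑ p ∈ P,
          ((1/(2*(p:ℝ)) : ℝ):ℂ)
            * Complex.exp ((-(2*t*Real.log p) : ℝ) * Complex.I)‖)^(2*k) := by
        apply intervalIntegral.integral_congr
        intro t _
        dsimp only
        rw [Qpoly_eq l t, mul_pow]
    _ = (Real.exp ((l:ℝ)/10))^(2*k) * ∫ t in T..(2*T), (‖∑ p ∈ P,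
          ((1/(2*(p:ℝ)):ℝ):ℂ)
            * Complex.exp ((-(2*t*Real.log p) : ℝ) * Complex.I)‖)^(2*k) :=
        intervalIntegral.integral_const_mul _ _
    _ ≤ (Real.exp ((l:ℝ)/10))^(2*k) * (T * k.factorial * (∑ p ∈ P, (1/(2*(p:ℝ)))^2)^k
          + (2*Real.exp (((l:ℝ)+1)*k)) * (∑ p ∈ P, 1/(2*(p:ℝ)))^(2*k)) :=
        mul_le_mul_of_nonneg_left hmb (by positivity)
    _ = (Real.exp ((l:ℝ)/10))^(2*k) * (T * k.factorial * (∑ p ∈ P, (1/(2*(p:ℝ)))^2)^k)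
        + (Real.exp ((l:ℝ)/10))^(2*k)
          * (2*Real.exp (((l:ℝ)+1)*k) * (∑ p ∈ P, 1/(2*(p:ℝ)))^(2*k)) := by ring
    _ ≤ 500 * T * Real.exp (-(l:ℝ) * Real.exp ((l:ℝ)/2))
        + 500 * T * Real.exp (-(l:ℝ) * Real.exp ((l:ℝ)/2)) := by
        apply add_le_add
        · exact partA T l k _ hl hT0 hk1 hkge hkle hB0 hBb
        · exact partB T l k _ hl hT0 hk1 hkge hTK hS0 hSb
    _ = 1000 * T * Real.exp (-(l:ℝ) * Real.exp ((l:ℝ)/2)) := by ring
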